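/- Let f : Ω → ℝ be a positive C² function on an open set Ω ⊆ ℂ and let W = W₁ + iW₂ : Ω → ℂ be a C¹ solution of the main Vekua equation ∂_z̄ W = (∂_z̄ f / f)·conj(W). Then the real part u = W₁ satisfies the Schrödinger equation Δu = ν·u with ν = (Δf)/f, and the imaginary part v = W₂ satisfies Δv = η·v with η = 2(|∇f|/f)² − ν, assuming W is C². -/

import Mathlib

open Complex Set

/-- Partial derivative in the x-direction. -/
noncomputable def pdx (F : ℂ → ℂ) (z : ℂ) : ℂ := fderiv ℝ F z 1
/-- Partial derivative in the y-direction. -/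
noncomputable def pdy (F : ℂ → ℂ) (z : ℂ) : ℂ := fderiv ℝ F z Complex.I
/-- Wirtinger derivative ∂_z = (1/2)(∂_x − i∂_y). -/
noncomputable def dz (F : ℂ → ℂ) (z : ℂ) : ℂ := (pdx F z - Complex.I * pdy F z) / 2
/-- Wirtinger derivative ∂_z̄ = (1/2)(∂_x + i∂_y). -/
noncomputable def dzbar (F : ℂ → ℂ) (z : ℂ) : ℂ := (pdx F z + Complex.I * pdy F z) / 2
/-- Laplacian Δ = ∂_xx + ∂_yy. -/
noncomputable def lap (F : ℂ → ℂ) (z : ℂ) : ℂ := pdx (pdx F) z + pdy (pdy F) z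

private lemma pd_conj {G : ℂ → ℂ} {z : ℂ} (hG : DifferentiableAt ℝ G z) (v : ℂ) :
    fderiv ℝ (fun w => (starRingEnd ℂ) (G w)) z v = (starRingEnd ℂ) (fderiv ℝ G z v) := by
  have h := (((Complex.conjCLE : ℂ ≃L[ℝ] ℂ) : ℂ →L[ℝ] ℂ).hasFDerivAt).comp z hG.hasFDerivAt
  rw [show (fun w => (starRingEnd ℂ) (G w))
      = (((Complex.conjCLE : ℂ ≃L[ℝ] ℂ) : ℂ →L[ℝ] ℂ) : ℂ → ℂ) ∘ G from rfl, h.fderiv]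
  rfl

private lemma diffAt_conj {G : ℂ → ℂ} {z : ℂ} (hG : DifferentiableAt ℝ G z) :
    DifferentiableAt ℝ (fun w => (starRingEnd ℂ) (G w)) z :=
  (((Complex.conjCLE : ℂ ≃L[ℝ] ℂ) : ℂ →L[ℝ] ℂ).differentiableAt).comp z hG

private lemma pd_diffAt {G : ℂ → ℂ} {z : ℂ} (hG : ContDiffAt ℝ 2 G z) (v : ℂ) :
    DifferentiableAt ℝ (fun w => fderiv ℝ G w v) z :=
  ((hG.fderiv_right (m := 1) (by norm_num)).differentiableAt one_ne_zero).clm_apply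
    (differentiableAt_const v)

private lemma pd_symm {G : ℂ → ℂ} {z : ℂ} (hG : ContDiffAt ℝ 2 G z) (u v : ℂ) :
    fderiv ℝ (fun w => fderiv ℝ G w v) z u = fderiv ℝ (fun w => fderiv ℝ G w u) z v := by
  have hd : DifferentiableAt ℝ (fderiv ℝ G) z :=
    (hG.fderiv_right (m := 1) (by norm_num)).differentiableAt one_ne_zero
  have h1 : ∀ a b : ℂ, fderiv ℝ (fun w => fderiv ℝ G w b) z a = fderiv ℝ (fderiv ℝ G) z a b := by
    intro a b
    rw [fderiv_clm_apply hd (differentiableAt_const b)]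
    simp
  rw [h1, h1, (hG.isSymmSndFDerivAt (by norm_num)) u v]

private lemma pd_affine {W : ℂ → ℂ} {w : ℂ} (hW : DifferentiableAt ℝ W w) (a b v : ℂ) :
    fderiv ℝ (fun u => a * W u + b * (starRingEnd ℂ) (W u)) w v
      = a * fderiv ℝ W w v + b * (starRingEnd ℂ) (fderiv ℝ W w v) := by
  have hc : DifferentiableAt ℝ (fun u => (starRingEnd ℂ) (W u)) w := diffAt_conj hW
  rw [fderiv_fun_add (hW.const_mul a) (hc.const_mul b)]
  simp only [ContinuousLinearMap.add_apply]
  rw [fderiv_const_mul hW a, fderiv_const_mul hc b]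
  simp only [ContinuousLinearMap.smul_apply, smul_eq_mul]
  rw [pd_conj hW]

private lemma pd_mul {A B : ℂ → ℂ} {z : ℂ} (hA : DifferentiableAt ℝ A z)
    (hB : DifferentiableAt ℝ B z) (v : ℂ) :
    fderiv ℝ (fun w => A w * B w) z v = fderiv ℝ A z v * B z + A z * fderiv ℝ B z v := by
  rw [fderiv_fun_mul hA hB]
  simp only [ContinuousLinearMap.add_apply, ContinuousLinearMap.smul_apply, smul_eq_mul]
  ring

private lemma pd_inv {G : ℂ → ℂ} {z : ℂ} (hG : DifferentiableAt ℝ G z) (h0 : G z ≠ 0) (v : ℂ) :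
    fderiv ℝ (fun w => (G w)⁻¹) z v = -fderiv ℝ G z v / G z ^ 2 := by
  have h1 : HasDerivAt (fun y : ℂ => y⁻¹) (-(G z ^ 2)⁻¹) (G z) := hasDerivAt_inv h0
  have h2 := (h1.hasFDerivAt.restrictScalars ℝ).comp z hG.hasFDerivAt
  rw [show (fun w => (G w)⁻¹) = (fun y : ℂ => y⁻¹) ∘ G from rfl, h2.fderiv]
  simp only [ContinuousLinearMap.coe_comp', Function.comp_apply,
    ContinuousLinearMap.coe_restrictScalars', ContinuousLinearMap.smulRight_apply,
    ContinuousLinearMap.one_apply, ContinuousLinearMap.toSpanSingleton_apply, smul_eq_mul]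
  ring

private lemma dz_mul {A B : ℂ → ℂ} {z : ℂ} (hA : DifferentiableAt ℝ A z)
    (hB : DifferentiableAt ℝ B z) :
    dz (fun w => A w * B w) z = dz A z * B z + A z * dz B z := by
  unfold dz pdx pdy
  rw [pd_mul hA hB, pd_mul hA hB]
  ring

private lemma dz_conj {G : ℂ → ℂ} {z : ℂ} (hG : DifferentiableAt ℝ G z) :
    dz (fun w => (starRingEnd ℂ) (G w)) z = (starRingEnd ℂ) (dzbar G z) := by
  unfold dz dzbar pdx pdy
  rw [pd_conj hG, pd_conj hG, map_div₀, map_add, map_mul, Complex.conj_I, map_ofNat]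
  ring

private lemma dz_inv {G : ℂ → ℂ} {z : ℂ} (hG : DifferentiableAt ℝ G z) (h0 : G z ≠ 0) :
    dz (fun w => (G w)⁻¹) z = -dz G z / G z ^ 2 := by
  unfold dz pdx pdy
  rw [pd_inv hG h0, pd_inv hG h0]
  ring

private lemma lap_eq_four_dz_dzbar {G : ℂ → ℂ} {z : ℂ} (hG : ContDiffAt ℝ 2 G z) :
    lap G z = 4 * dz (dzbar G) z := by
  have hx := pd_diffAt hG 1
  have hy := pd_diffAt hG Complex.I
  have hfun : dzbar G = fun w => (1/2 : ℂ) * fderiv ℝ G w 1 + (Complex.I/2) * fderiv ℝ G w Complex.I := by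
    funext w; unfold dzbar pdx pdy; ring
  have e : ∀ v : ℂ, fderiv ℝ (dzbar G) z v
      = (1/2 : ℂ) * fderiv ℝ (fun w => fderiv ℝ G w 1) z v
        + (Complex.I/2) * fderiv ℝ (fun w => fderiv ℝ G w Complex.I) z v := by
    intro v
    rw [hfun, fderiv_fun_add (hx.const_mul _) (hy.const_mul _)]
    simp only [ContinuousLinearMap.add_apply]
    rw [fderiv_const_mul hx, fderiv_const_mul hy]
    simp only [ContinuousLinearMap.smul_apply, smul_eq_mul]
  unfold lap dz pdx pdy
  rw [e 1, e Complex.I, pd_symm hG 1 Complex.I]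
  linear_combination (fderiv ℝ (fun w => fderiv ℝ G w Complex.I) z Complex.I) * Complex.I_sq

private lemma lap_affine {W : ℂ → ℂ} {Ω : Set ℂ} (hΩ : IsOpen Ω) {z : ℂ} (hz : z ∈ Ω)
    (hW : ContDiffOn ℝ 2 W Ω) (a b : ℂ) :
    lap (fun w => a * W w + b * (starRingEnd ℂ) (W w)) z
      = a * lap W z + b * (starRingEnd ℂ) (lap W z) := by
  have hWc : ∀ w ∈ Ω, ContDiffAt ℝ 2 W w := fun w hw => hW.contDiffAt (hΩ.mem_nhds hw)
  have hWd : ∀ w ∈ Ω, DifferentiableAt ℝ W w := fun w hw => (hWc w hw).differentiableAt two_ne_zero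
  have hev : ∀ v : ℂ, (fun w => fderiv ℝ (fun u => a * W u + b * (starRingEnd ℂ) (W u)) w v)
      =ᶠ[nhds z] (fun w => a * fderiv ℝ W w v + b * (starRingEnd ℂ) (fderiv ℝ W w v)) :=
    fun v => Filter.eventuallyEq_of_mem (hΩ.mem_nhds hz) (fun w hw => pd_affine (hWd w hw) a b v)
  have key : ∀ u v : ℂ, fderiv ℝ (fun w => fderiv ℝ (fun x => a * W x + b * (starRingEnd ℂ) (W x)) w v) z u
      = a * fderiv ℝ (fun w => fderiv ℝ W w v) z u
        + b * (starRingEnd ℂ) (fderiv ℝ (fun w => fderiv ℝ W w v) z u) := by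
    intro u v
    rw [(hev v).fderiv_eq]
    exact pd_affine (pd_diffAt (hWc z hz) v) a b u
  unfold lap pdx pdy
  rw [key 1 1, key Complex.I Complex.I, map_add]
  ring

theorem vekua_to_schrodinger
    (Ω : Set ℂ) (hΩ : IsOpen Ω) (f : ℂ → ℝ) (W : ℂ → ℂ)
    (hf : ContDiffOn ℝ 2 (fun z => (f z : ℂ)) Ω)
    (hfpos : ∀ z ∈ Ω, 0 < f z)
    (hW : ContDiffOn ℝ 2 W Ω)
    (hVekua : ∀ z ∈ Ω,
      dzbar W z = dzbar (fun w => (f w : ℂ)) z / (f z : ℂ) * (starRingEnd ℂ) (W z)) :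
    ∀ z ∈ Ω,
      lap (fun w => (((W w).re : ℂ))) z
        = (lap (fun w => (f w : ℂ)) z / (f z : ℂ)) * (((W z).re : ℂ))
      ∧
      lap (fun w => (((W w).im : ℂ))) z
        = (2 * ((pdx (fun w => (f w : ℂ)) z) ^ 2 + (pdy (fun w => (f w : ℂ)) z) ^ 2)
              / ((f z : ℂ)) ^ 2
            - lap (fun w => (f w : ℂ)) z / (f z : ℂ)) * (((W z).im : ℂ)) := by
  intro z hz
  have hmem : Ω ∈ nhds z := hΩ.mem_nhds hz
  set F : ℂ → ℂ := fun w => (f w : ℂ) with hFdef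
  have hFc : ∀ w ∈ Ω, ContDiffAt ℝ 2 F w := fun w hw => hf.contDiffAt (hΩ.mem_nhds hw)
  have hWc : ∀ w ∈ Ω, ContDiffAt ℝ 2 W w := fun w hw => hW.contDiffAt (hΩ.mem_nhds hw)
  have hFd : ∀ w ∈ Ω, DifferentiableAt ℝ F w := fun w hw => (hFc w hw).differentiableAt two_ne_zero
  have hWd : ∀ w ∈ Ω, DifferentiableAt ℝ W w := fun w hw => (hWc w hw).differentiableAt two_ne_zero
  have hF0 : ∀ w ∈ Ω, F w ≠ 0 := fun w hw => by
    simp only [hFdef, ne_eq, Complex.ofReal_eq_zero]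
    exact ne_of_gt (hfpos w hw)
  have hFreal : ∀ w, (starRingEnd ℂ) (F w) = F w := fun w => Complex.conj_ofReal _
  -- differentiability of first partials
  have hFdx : DifferentiableAt ℝ (pdx F) z := pd_diffAt (hFc z hz) 1
  have hFdy : DifferentiableAt ℝ (pdy F) z := pd_diffAt (hFc z hz) Complex.I
  -- reality of partials of F on Ω
  have hpreal : ∀ v : ℂ, ∀ w ∈ Ω, (starRingEnd ℂ) (fderiv ℝ F w v) = fderiv ℝ F w v := by
    intro v w hw
    have h := pd_conj (hFd w hw) v
    simp only [hFreal] at h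
    exact h.symm
  have hpx : ∀ w ∈ Ω, (starRingEnd ℂ) (pdx F w) = pdx F w := fun w hw => hpreal 1 w hw
  have hpy : ∀ w ∈ Ω, (starRingEnd ℂ) (pdy F w) = pdy F w := fun w hw => hpreal Complex.I w hw
  -- the coefficient function α
  set α : ℂ → ℂ := fun w => dzbar F w * (F w)⁻¹ with hα
  have hdzbarF_fun : dzbar F = fun w => (1/2 : ℂ) * pdx F w + (Complex.I/2) * pdy F w := by
    funext w; unfold dzbar; ring
  have hdzbarFd : DifferentiableAt ℝ (dzbar F) z := by
    rw [hdzbarF_fun]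
    exact (hFdx.const_mul _).add (hFdy.const_mul _)
  have hαdz : DifferentiableAt ℝ α z := hdzbarFd.mul ((hFd z hz).inv (hF0 z hz))
  have hcWd : DifferentiableAt ℝ (fun w => (starRingEnd ℂ) (W w)) z := diffAt_conj (hWd z hz)
  -- the Vekua equation, locally
  have hEv : dzbar W =ᶠ[nhds z] fun w => α w * (starRingEnd ℂ) (W w) :=
    Filter.eventuallyEq_of_mem hmem (fun w hw => by
      rw [hVekua w hw, hα, div_eq_mul_inv])
  have h1 : lap W z = 4 * dz (fun w => α w * (starRingEnd ℂ) (W w)) z := by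
    rw [lap_eq_four_dz_dzbar (hWc z hz)]
    unfold dz pdx pdy
    rw [hEv.fderiv_eq]
  -- individual derivative computations
  have hVz : dzbar W z = α z * (starRingEnd ℂ) (W z) := by
    rw [hVekua z hz, hα, div_eq_mul_inv]
  have hdzF_conj : dz F z = (starRingEnd ℂ) (dzbar F z) := by
    unfold dz dzbar
    rw [map_div₀, map_add, map_mul, Complex.conj_I, map_ofNat, hpx z hz, hpy z hz]
    ring
  have hconj_dzbarF : (starRingEnd ℂ) (dzbar F z) = dz F z := hdzF_conj.symm
  have hdzconjW : dz (fun w => (starRingEnd ℂ) (W w)) z = (starRingEnd ℂ) (dzbar W z) :=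
    dz_conj (hWd z hz)
  have hB : (starRingEnd ℂ) (dzbar W z) = dz F z * (F z)⁻¹ * W z := by
    rw [hVz, map_mul, Complex.conj_conj, hα, map_mul, map_inv₀, hconj_dzbarF, hFreal z]
  have hdzdzbarF : dz (dzbar F) z = lap F z / 4 := by
    rw [lap_eq_four_dz_dzbar (hFc z hz)]; ring
  have hdzα : dz α z = lap F z / (4 * F z) - dzbar F z * dz F z / F z ^ 2 := by
    have h := dz_mul (B := fun w => (F w)⁻¹) hdzbarFd ((hFd z hz).inv (hF0 z hz))
    rw [hα]
    show dz (fun w => dzbar F w * (F w)⁻¹) z = _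
    rw [h, dz_inv (hFd z hz) (hF0 z hz), hdzdzbarF]
    field_simp
    ring
  have hS : dzbar F z * dz F z = ((pdx F z) ^ 2 + (pdy F z) ^ 2) / 4 := by
    unfold dz dzbar
    linear_combination (-(pdy F z) ^ 2 / 4) * Complex.I_sq
  -- the main formula for lap W
  have hmain : lap W z
      = (lap F z / F z - ((pdx F z) ^ 2 + (pdy F z) ^ 2) / F z ^ 2) * (starRingEnd ℂ) (W z)
        + (((pdx F z) ^ 2 + (pdy F z) ^ 2) / F z ^ 2) * W z := by
    rw [h1, dz_mul hαdz hcWd, hdzconjW, hB, hdzα, hα]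
    show 4 * ((lap F z / (4 * F z) - dzbar F z * dz F z / F z ^ 2) * (starRingEnd ℂ) (W z)
      + dzbar F z * (F z)⁻¹ * (dz F z * (F z)⁻¹ * W z)) = _
    linear_combination (4 * (W z - (starRingEnd ℂ) (W z)) / F z ^ 2) * hS
  -- reality of lap F z
  have hlapF : (starRingEnd ℂ) (lap F z) = lap F z := by
    have r : ∀ v : ℂ, (starRingEnd ℂ) (fderiv ℝ (fun w => fderiv ℝ F w v) z v)
        = fderiv ℝ (fun w => fderiv ℝ F w v) z v := by
      intro v
      have e1 : (fun w => (starRingEnd ℂ) (fderiv ℝ F w v)) =ᶠ[nhds z]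
          (fun w => fderiv ℝ F w v) :=
        Filter.eventuallyEq_of_mem hmem (fun w hw => hpreal v w hw)
      have h := pd_conj (pd_diffAt (hFc z hz) v) v
      rw [e1.fderiv_eq] at h
      exact h.symm
    unfold lap pdx pdy
    rw [map_add, r 1, r Complex.I]
  have hcmain : (starRingEnd ℂ) (lap W z)
      = (lap F z / F z - ((pdx F z) ^ 2 + (pdy F z) ^ 2) / F z ^ 2) * W z
        + (((pdx F z) ^ 2 + (pdy F z) ^ 2) / F z ^ 2) * (starRingEnd ℂ) (W z) := by
    rw [hmain]
    simp only [map_add, map_sub, map_mul, map_div₀, map_pow, map_ofNat,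
      Complex.conj_conj, hlapF, hFreal z, hpx z hz, hpy z hz]
  -- decompose real and imaginary parts
  have hfunRe : (fun w => (((W w).re : ℂ)))
      = fun w => (1/2 : ℂ) * W w + (1/2 : ℂ) * (starRingEnd ℂ) (W w) := by
    funext w
    have h := Complex.add_conj (W w)
    push_cast at h
    linear_combination (-1/2 : ℂ) * h
  have hfunIm : (fun w => (((W w).im : ℂ)))
      = fun w => (-Complex.I/2 : ℂ) * W w + (Complex.I/2 : ℂ) * (starRingEnd ℂ) (W w) := by
    funext w
    have h := Complex.sub_conj (W w)
    push_cast at h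
    linear_combination (Complex.I/2) * h + (((W w).im : ℂ)) * Complex.I_sq
  have hFz : ((f z : ℝ) : ℂ) = F z := rfl
  constructor
  · rw [hfunRe, lap_affine hΩ hz hW (1/2) (1/2), hcmain, hmain, hFz]
    have h := Complex.add_conj (W z)
    push_cast at h
    linear_combination (lap F z / (2 * F z)) * h
  · rw [hfunIm, lap_affine hΩ hz hW (-Complex.I/2) (Complex.I/2), hcmain, hmain, hFz]
    have h := Complex.sub_conj (W z)
    push_cast at h
    linear_combination (Complex.I/2 * (lap F z / F z
        - 2 * ((pdx F z) ^ 2 + (pdy F z) ^ 2) / F z ^ 2)) * h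
      + ((lap F z / F z - 2 * ((pdx F z) ^ 2 + (pdy F z) ^ 2) / F z ^ 2) * ((W z).im : ℂ))
        * Complex.I_sq
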